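/- Let π be a representation of O_d with a vector state ψ_Ω invariant under the canonical endomorphism Λ(X) = ∑ₖ SₖXSₖ*, and let Q be the support projection of ψ_Ω in π(UHF_d)''. Then Λ(Q) ≥ Q, and consequently (1 − Q) Sₖ* Q = 0 for all 1 ≤ k ≤ d. -/

import Mathlib

private lemma proj_apply_eq_of_inner_one {H : Type*} [NormedAddCommGroup H]
    [InnerProductSpace ℂ H] [CompleteSpace H] (P : H →L[ℂ] H)
    (hPsa : IsSelfAdjoint P) (hPP : P * P = P) (x : H)
    (h1 : (inner ℂ x (P x) : ℂ) = (inner ℂ x x : ℂ)) : P x = x := by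
  have hsym := ContinuousLinearMap.isSelfAdjoint_iff_isSymmetric.mp hPsa
  have hPPx : P (P x) = P x := by rw [← ContinuousLinearMap.mul_apply, hPP]
  have hPx : (inner ℂ (P x) (P x) : ℂ) = inner ℂ x (P x) := by
    have := hsym x (P x)
    simpa [hPPx] using this
  have hPxx : (inner ℂ (P x) x : ℂ) = inner ℂ x (P x) := by
    simpa using hsym x x
  have hz : (inner ℂ (x - P x) (x - P x) : ℂ) = 0 := by
    rw [inner_sub_sub_self, hPx, hPxx, h1]
    ring
  have h0 : x - P x = 0 := inner_self_eq_zero.mp hz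
  have := sub_eq_zero.mp h0
  exact this.symm

/-- the support projection `Q` of a `Λ`-invariant vector state is
sub-harmonic, `Λ(Q) ≥ Q`, and consequently `(1 − Q) Sₖ* Q = 0` for all `k`. -/
theorem support_projection_subharmonic_cuntz
    {H : Type*} [NormedAddCommGroup H] [InnerProductSpace ℂ H] [CompleteSpace H]
    {d : ℕ} (hd : 2 ≤ d) (S : Fin d → H →L[ℂ] H)
    (hrel₁ : ∀ i j : Fin d, star (S i) * S j = if i = j then 1 else 0)
    (hrel₂ : ∑ i : Fin d, S i * star (S i) = 1)
    (Ω : H) (hΩ : ‖Ω‖ = 1)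
    (N : VonNeumannAlgebra H)
    -- `N` (playing the role of `π(UHF_d)''`) is invariant under `Λ(X) = ∑ᵢ SᵢXSᵢ*`:
    (hΛN : ∀ X ∈ N, (∑ i : Fin d, S i * X * star (S i)) ∈ N)
    -- the vector state `ψ_Ω` is `Λ`-invariant on `N`:
    (hinv : ∀ X ∈ N, (inner ℂ Ω ((∑ i : Fin d, S i * X * star (S i)) Ω) : ℂ)
        = (inner ℂ Ω (X Ω) : ℂ))
    -- `Q` is the support projection of `ψ_Ω` in `N`:
    (Q : H →L[ℂ] H) (hQN : Q ∈ N)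
    (hQ : IsIdempotentElem Q) (hQsa : IsSelfAdjoint Q) (hQΩ : Q Ω = Ω)
    (hQmin : ∀ e ∈ N, IsIdempotentElem e → IsSelfAdjoint e → e Ω = Ω → Q ≤ e) :
    Q ≤ ∑ i : Fin d, S i * Q * star (S i) ∧
    ∀ k : Fin d, ((1 : H →L[ℂ] H) - Q) * star (S k) * Q = 0 := by
  set P : H →L[ℂ] H := ∑ i : Fin d, S i * Q * star (S i) with hPdef
  have hPN : P ∈ N := hΛN Q hQN
  have hPsa : IsSelfAdjoint P := by
    rw [IsSelfAdjoint, hPdef, star_sum]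
    refine Finset.sum_congr rfl fun i _ => ?_
    simp [star_mul, mul_assoc, hQsa.star_eq]
  have key : ∀ i j : Fin d, (S i * Q * star (S i)) * (S j * Q * star (S j))
      = if i = j then S i * Q * star (S i) else 0 := by
    intro i j
    have h1 : (S i * Q * star (S i)) * (S j * Q * star (S j))
        = S i * (Q * ((star (S i) * S j) * Q)) * star (S j) := by noncomm_ring
    rw [h1, hrel₁ i j]
    by_cases hij : i = j
    · subst hij; simp [hQ.eq]
    · simp [hij]
  have hPP : P * P = P := by
    rw [hPdef, Finset.sum_mul_sum]
    simp_rw [key]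
    simp
  have hPΩ : P Ω = Ω := by
    apply proj_apply_eq_of_inner_one P hPsa hPP
    rw [hinv Q hQN, hQΩ]
  have hQP : Q ≤ P := hQmin P hPN hPP hPsa hPΩ
  refine ⟨hQP, fun k => ?_⟩
  have hpos : (P - Q).IsPositive := hQP
  have hsym := ContinuousLinearMap.isSelfAdjoint_iff_isSymmetric.mp hPsa
  -- from Q ≤ P (and both projections) deduce P * Q = Q
  have hPQ : P * Q = Q := by
    ext x
    set y := Q x with hy
    have hQy : Q y = y := by rw [hy, ← ContinuousLinearMap.mul_apply, hQ.eq]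
    have hnn : 0 ≤ RCLike.re (inner ℂ ((P - Q) y) y : ℂ) := hpos.2 y
    have hrev : RCLike.re (inner ℂ y y : ℂ) ≤ RCLike.re (inner ℂ (P y) y : ℂ) := by
      have h' : (inner ℂ ((P - Q) y) y : ℂ) = inner ℂ (P y) y - inner ℂ (Q y) y := by
        simp [inner_sub_left]
      rw [h', hQy, map_sub] at hnn; linarith
    -- self-adjointness facts
    have hP_real : (inner ℂ (P y) y : ℂ) = inner ℂ y (P y) := by simpa using hsym y y
    have hPPy : P (P y) = P y := by rw [← ContinuousLinearMap.mul_apply, hPP]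
    have hPy2 : (inner ℂ (P y) (P y) : ℂ) = inner ℂ y (P y) := by
      simpa [hPPy] using hsym y (P y)
    have hconj : starRingEnd ℂ (inner ℂ y (P y)) = inner ℂ y (P y) := by
      rw [inner_conj_symm]; exact hP_real
    have him : (inner ℂ y (P y) : ℂ).im = 0 := by
      have := congrArg Complex.im hconj
      simp only [Complex.conj_im] at this
      linarith
    have hself_im : (inner ℂ y y : ℂ).im = 0 := by
      have : starRingEnd ℂ (inner ℂ y y : ℂ) = inner ℂ y y := inner_conj_symm y y
      have h2 := congrArg Complex.im this
      simp only [Complex.conj_im] at h2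
      linarith
    have hle : (inner ℂ y (P y) : ℂ).re ≤ (inner ℂ y y : ℂ).re := by
      have h0 : (0:ℝ) ≤ RCLike.re (inner ℂ (y - P y) (y - P y) : ℂ) := inner_self_nonneg
      have hexp : (inner ℂ (y - P y) (y - P y) : ℂ)
          = inner ℂ y y - inner ℂ y (P y) - inner ℂ (P y) y + inner ℂ (P y) (P y) := by
        rw [inner_sub_sub_self]
      rw [hexp, hPy2, hP_real] at h0
      simp only [map_add, map_sub] at h0
      have : RCLike.re (inner ℂ y (P y) : ℂ) = (inner ℂ y (P y) : ℂ).re := rfl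
      have h3 : RCLike.re (inner ℂ y y : ℂ) = (inner ℂ y y : ℂ).re := rfl
      linarith [h0]
    have hge : (inner ℂ y y : ℂ).re ≤ (inner ℂ y (P y) : ℂ).re := by
      have : RCLike.re (inner ℂ (P y) y : ℂ) = RCLike.re (inner ℂ y (P y) : ℂ) := by
        rw [hP_real]
      have h4 : RCLike.re (inner ℂ y (P y) : ℂ) = (inner ℂ y (P y) : ℂ).re := rfl
      have h5 : RCLike.re (inner ℂ y y : ℂ) = (inner ℂ y y : ℂ).re := rfl
      linarith [hrev]
    have heq : (inner ℂ y (P y) : ℂ) = inner ℂ y y := by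
      apply Complex.ext
      · exact le_antisymm hle hge
      · rw [him, hself_im]
    have hPyy : P y = y := proj_apply_eq_of_inner_one P hPsa hPP y heq
    simpa [hy] using hPyy
  have hQsum : Q * Q = Q := hQ.eq
  -- the vanishing sum of positive operators
  have hT0 : ∑ j : Fin d, (Q * S j * (1 - Q)) * star (Q * S j * (1 - Q)) = 0 := by
    have hterm : ∀ j : Fin d, (Q * S j * (1 - Q)) * star (Q * S j * (1 - Q))
        = Q * (S j * star (S j)) * Q - Q * (S j * Q * star (S j)) * Q := by
      intro j
      have hstar : star (Q * S j * (1 - Q)) = (1 - Q) * star (S j) * Q := by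
        simp [star_mul, hQsa.star_eq, mul_assoc]
      rw [hstar]
      have h11 : ((1 : H →L[ℂ] H) - Q) * ((1 : H →L[ℂ] H) - Q) = 1 - Q := by
        have h12 : ((1 : H →L[ℂ] H) - Q) * (1 - Q) = 1 - Q - Q + Q * Q := by noncomm_ring
        rw [h12, hQsum]; abel
      calc (Q * S j * (1 - Q)) * ((1 - Q) * star (S j) * Q)
          = Q * S j * ((1 - Q) * (1 - Q)) * star (S j) * Q := by noncomm_ring
        _ = Q * S j * (1 - Q) * star (S j) * Q := by rw [h11]
        _ = Q * (S j * star (S j)) * Q - Q * (S j * Q * star (S j)) * Q := by noncomm_ring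
    simp_rw [hterm]
    rw [Finset.sum_sub_distrib, ← Finset.sum_mul, ← Finset.mul_sum,
        ← Finset.sum_mul, ← Finset.mul_sum, hrel₂, ← hPdef]
    have hQPQ : Q * P * Q = Q := by rw [mul_assoc, hPQ, hQsum]
    rw [hQPQ, mul_one, hQsum, sub_self]
  -- extract the single term
  have hstar : star (Q * S k * (1 - Q)) = (1 - Q) * star (S k) * Q := by
    simp [star_mul, hQsa.star_eq, mul_assoc]
  rw [← hstar]
  ext x
  have hsum : ∑ j : Fin d,
      ((inner ℂ ((star (Q * S j * (1 - Q))) x) ((star (Q * S j * (1 - Q))) x)) : ℂ) = 0 := by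
    have h := congrArg (fun A : H →L[ℂ] H => (inner ℂ (A x) x : ℂ)) hT0
    simp only [ContinuousLinearMap.sum_apply, sum_inner, ContinuousLinearMap.zero_apply,
      inner_zero_left] at h
    rw [← h]
    refine Finset.sum_congr rfl fun j _ => ?_
    rw [ContinuousLinearMap.mul_apply]
    conv_rhs => rw [ContinuousLinearMap.star_eq_adjoint,
      ← ContinuousLinearMap.adjoint_inner_right, ← ContinuousLinearMap.star_eq_adjoint]
  have hreal : ∑ j : Fin d, ‖(star (Q * S j * (1 - Q))) x‖ ^ 2 = 0 := by
    simp_rw [inner_self_eq_norm_sq_to_K] at hsum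
    have h2 : ((∑ j : Fin d, ‖(star (Q * S j * (1 - Q))) x‖ ^ 2 : ℝ) : ℂ) = 0 := by
      push_cast
      exact hsum
    exact_mod_cast h2
  have hk : ‖(star (Q * S k * (1 - Q))) x‖ ^ 2 = 0 :=
    (Finset.sum_eq_zero_iff_of_nonneg (fun j _ => by positivity)).mp hreal k
      (Finset.mem_univ k)
  have hx0 : (star (Q * S k * (1 - Q))) x = 0 := by
    have := pow_eq_zero_iff (n := 2) (by norm_num) |>.mp hk
    exact norm_eq_zero.mp this
  simpa using hx0
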